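/- Let M be a matroid on a finite set V with bases Γ, and let A, B ∈ Γ be bases whose incidence vectors 1_A, 1_B span an edge (1-dimensional face) of the matroid polytope conv{1_C : C ∈ Γ} ⊂ ℝ^V. Then 1_A − 1_B = e_u − e_v for some u, v ∈ V; that is, |A \ B| = |B \ A| = 1. -/

import Mathlib

open scoped Classical

/-- The incidence vector of a subset `B` of a finite type `V`. -/
noncomputable def incVec {V : Type*} (B : Set V) : V → ℝ :=
  fun v => if v ∈ B then 1 else 0

/-- The matroid polytope: the convex hull of the incidence vectors of the bases. -/
noncomputable def matroidPolytope {V : Type*} (M : Matroid V) : Set (V → ℝ) :=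
  convexHull ℝ {x | ∃ B, M.IsBase B ∧ x = incVec B}

open Set in
/-- Symmetric basis exchange for matroids on a finite type. -/
lemma matroid_symmetric_exchange {V : Type*} [Fintype V] (M : Matroid V) {A B : Set V}
    (hA : M.IsBase A) (hB : M.IsBase B) {u : V} (hu : u ∈ A \ B) :
    ∃ v ∈ B \ A, M.IsBase (insert v (A \ {u})) ∧ M.IsBase (insert u (B \ {v})) := by
  have huE : u ∈ M.E := hA.subset_ground hu.1
  -- u is in the closure of B
  have huclB : u ∈ M.closure B := by rw [hB.closure_eq]; exact huE
  -- choose a minimal subset S of B with u ∈ closure S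
  have hPex : ∃ n : ℕ, ∃ S, S ⊆ B ∧ u ∈ M.closure S ∧ S.ncard = n :=
    ⟨B.ncard, B, Subset.rfl, huclB, rfl⟩
  classical
  obtain ⟨S, hSB, huS, hScard⟩ := Nat.find_spec hPex
  have hmin : ∀ S', S' ⊆ B → u ∈ M.closure S' → S.ncard ≤ S'.ncard := by
    intro S' hS'B huS'
    rw [hScard]
    exact Nat.find_le ⟨S', hS'B, huS', rfl⟩
  -- every element v of S satisfies u ∉ closure (B \ {v})
  have hkey : ∀ v ∈ S, u ∉ M.closure (B \ {v}) := by
    intro v hvS hucl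
    have hvB : v ∈ B := hSB hvS
    have hSv : u ∉ M.closure (S \ {v}) := by
      intro hc
      have := hmin (S \ {v}) ((diff_subset).trans hSB) hc
      exact absurd this (not_le.2 (Set.ncard_diff_singleton_lt_of_mem hvS S.toFinite))
    have hSins : insert v (S \ {v}) = S := by
      rw [Set.insert_diff_singleton, Set.insert_eq_of_mem hvS]
    have hex : v ∈ M.closure (insert u (S \ {v})) :=
      (Matroid.closure_exchange (X := S \ {v}) (e := u) (f := v)
        ⟨by rwa [hSins], hSv⟩).1
    set T : Set V := insert u (B \ {v}) with hT
    have hTE : T ⊆ M.E :=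
      insert_subset huE ((diff_subset).trans hB.subset_ground)
    have hvT : v ∈ M.closure T :=
      M.closure_subset_closure
        (insert_subset_insert (diff_subset_diff_left hSB)) hex
    have hBsub : B ⊆ M.closure T := by
      intro w hw
      by_cases hwv : w = v
      · exact hwv ▸ hvT
      · exact M.subset_closure T hTE (Or.inr ⟨hw, hwv⟩)
    have hTcl : M.closure T = M.E := by
      refine (M.closure_subset_ground T).antisymm ?_
      rw [← hB.closure_eq]
      exact (M.closure_subset_closure_of_subset_closure hBsub)
    have hTspan : M.Spanning T := by
      rw [Matroid.spanning_iff_closure_eq hTE]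
      exact hTcl
    obtain ⟨B'', hB'', hB''T⟩ := hTspan.exists_isBase_subset
    have hcardT : T.encard = B.encard := Set.encard_exchange hu.2 hvB
    have hBT : B'' = T := by
      refine B''.toFinite.eq_of_subset_of_encard_le hB''T ?_
      rw [hcardT, hB''.encard_eq_encard_of_isBase hB]
    have hTindep : M.Indep (insert u (B \ {v})) := by rw [← hT, ← hBT]; exact hB''.indep
    have hnotmem : u ∉ B \ {v} := fun h => hu.2 h.1
    rw [(hB.indep.subset diff_subset).insert_indep_iff_of_notMem hnotmem] at hTindep
    exact hTindep.2 hucl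
  -- some element of S is outside the closure of A \ {u}
  have hexv : ∃ v ∈ S, v ∉ M.closure (A \ {u}) := by
    by_contra h
    push_neg at h
    have : u ∈ M.closure (A \ {u}) :=
      M.closure_subset_closure_of_subset_closure h huS
    exact hA.indep.notMem_closure_diff_of_mem hu.1 this
  obtain ⟨v, hvS, hvcl⟩ := hexv
  have hvB : v ∈ B := hSB hvS
  have hvu : v ≠ u := fun h => hu.2 (h ▸ hvB)
  have hvA : v ∉ A := by
    intro hvA
    exact hvcl (M.subset_closure (A \ {u}) ((diff_subset).trans hA.subset_ground)
      ⟨hvA, hvu⟩)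
  have hvE : v ∈ M.E := hB.subset_ground hvB
  have hnot1 : v ∉ A \ {u} := fun h => hvA h.1
  have hindep1 : M.Indep (insert v (A \ {u})) := by
    rw [(hA.indep.subset diff_subset).insert_indep_iff_of_notMem hnot1]
    exact ⟨hvE, hvcl⟩
  have hbase1 : M.IsBase (insert v (A \ {u})) := hA.exchange_isBase_of_indep hvA hindep1
  have hnot2 : u ∉ B \ {v} := fun h => hu.2 h.1
  have hindep2 : M.Indep (insert u (B \ {v})) := by
    rw [(hB.indep.subset diff_subset).insert_indep_iff_of_notMem hnot2]
    exact ⟨huE, hkey v hvS⟩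
  exact ⟨v, ⟨hvB, hvA⟩, hbase1, hB.exchange_isBase_of_indep hu.2 hindep2⟩

lemma incVec_injective {V : Type*} : Function.Injective (incVec (V := V)) := by
  intro A B h
  ext w
  have := congrFun h w
  simp only [incVec] at this
  by_cases hwA : w ∈ A <;> by_cases hwB : w ∈ B <;> simp_all

/-- If the incidence vectors of two bases `A, B` of a matroid on a finite set span an
edge (a 1-dimensional face, formalized as: the segment between them is an extreme
subset and they are distinct) of the matroid polytope, then
`1_A − 1_B = e_u − e_v` for some `u, v ∈ V`; in particular
`A \ B` and `B \ A` are singletons. -/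
theorem matroid_polytope_edge {V : Type*} [Fintype V] (M : Matroid V)
    (A B : Set V) (hA : M.IsBase A) (hB : M.IsBase B) (hne : incVec A ≠ incVec B)
    (hedge : IsExtreme ℝ (matroidPolytope M) (segment ℝ (incVec A) (incVec B))) :
    ∃ u v : V,
      (incVec A - incVec B = (fun w => if w = u then (1 : ℝ) else 0) -
        (fun w => if w = v then (1 : ℝ) else 0)) ∧
      A \ B = {u} ∧ B \ A = {v} := by
  have hABne : A ≠ B := fun h => hne (h ▸ rfl)
  have hABdiff : (A \ B).Nonempty := by
    rw [Set.nonempty_iff_ne_empty]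
    intro h
    exact hABne (hA.eq_of_subset_isBase hB (Set.diff_eq_empty.1 h))
  obtain ⟨u, hu⟩ := hABdiff
  obtain ⟨v, hv, hA1, hB1⟩ := matroid_symmetric_exchange M hA hB hu
  have huv : u ≠ v := fun h => hv.2 (h ▸ hu.1)
  set A₁ : Set V := insert v (A \ {u}) with hA₁def
  set B₁ : Set V := insert u (B \ {v}) with hB₁def
  -- the incidence vectors of A₁ and B₁ sum to those of A and B
  have hsum : incVec A₁ + incVec B₁ = incVec A + incVec B := by
    funext w
    simp only [Pi.add_apply, incVec, hA₁def, hB₁def, Set.mem_insert_iff, Set.mem_diff,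
      Set.mem_singleton_iff]
    by_cases hwu : w = u
    · subst hwu
      simp [huv, hu.1, hu.2]
    · by_cases hwv : w = v
      · subst hwv
        simp [hv.1, hv.2, Ne.symm huv, hwu]
      · by_cases hwA : w ∈ A <;> by_cases hwB : w ∈ B <;> simp [hwu, hwv, hwA, hwB]
  -- the midpoint of the segment lies in the open segment between incVec A₁ and incVec B₁
  have hmseg : ((1:ℝ)/2) • (incVec A + incVec B) ∈ segment ℝ (incVec A) (incVec B) :=
    ⟨1/2, 1/2, by norm_num, by norm_num, by norm_num, by module⟩
  have hmopen : ((1:ℝ)/2) • (incVec A + incVec B) ∈ openSegment ℝ (incVec A₁) (incVec B₁) :=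
    ⟨1/2, 1/2, by norm_num, by norm_num, by norm_num, by rw [← hsum]; module⟩
  have hxP : incVec A₁ ∈ matroidPolytope M :=
    subset_convexHull ℝ _ ⟨A₁, hA1, rfl⟩
  have hyP : incVec B₁ ∈ matroidPolytope M :=
    subset_convexHull ℝ _ ⟨B₁, hB1, rfl⟩
  have hx : incVec A₁ ∈ segment ℝ (incVec A) (incVec B) :=
    (hedge.2 hxP hyP hmseg hmopen)
  obtain ⟨a, b, ha, hb, hab, heq⟩ := hx
  -- evaluate at v to see that a = 0, so A₁ = B
  have hv' := congrFun heq v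
  simp only [Pi.add_apply, Pi.smul_apply, smul_eq_mul, incVec, hA₁def,
    Set.mem_insert_iff] at hv'
  rw [if_neg hv.2, if_pos hv.1] at hv'
  simp only [true_or, if_true] at hv'
  have hb1 : b = 1 := by linarith
  have ha0 : a = 0 := by linarith
  have hA₁B : A₁ = B := by
    apply incVec_injective
    rw [← heq, ha0, hb1]
    simp
  -- hence A \ B = {u}
  have hABu : A \ B = {u} := by
    ext w
    simp only [Set.mem_diff, Set.mem_singleton_iff]
    constructor
    · rintro ⟨hwA, hwB⟩
      by_contra hwu
      exact hwB (hA₁B ▸ (Or.inr ⟨hwA, hwu⟩ : w ∈ A₁))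
    · rintro rfl; exact hu
  -- and B \ A is a singleton containing v
  have hcard : (B \ A).encard = 1 := by
    rw [hB.encard_diff_comm hA, hABu, Set.encard_singleton]
  obtain ⟨v₀, hv₀⟩ := Set.encard_eq_one.1 hcard
  have hvv₀ : v = v₀ := by
    have : v ∈ ({v₀} : Set V) := hv₀ ▸ hv
    exact this
  subst hvv₀
  refine ⟨u, v, ?_, hABu, hv₀⟩
  funext w
  simp only [Pi.sub_apply, incVec]
  by_cases hwA : w ∈ A <;> by_cases hwB : w ∈ B
  · have hwu : w ≠ u := fun h => hu.2 (h ▸ hwB)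
    have hwv : w ≠ v := fun h => hv.2 (h ▸ hwA)
    simp [hwA, hwB, hwu, hwv]
  · have hwu : w = u := by
      have : w ∈ A \ B := ⟨hwA, hwB⟩
      rwa [hABu] at this
    subst hwu
    simp [hu.1, hu.2, huv]
  · have hwv : w = v := by
      have : w ∈ B \ A := ⟨hwB, hwA⟩
      rwa [hv₀] at this
    subst hwv
    simp [hv.1, hv.2, Ne.symm huv]
  · have hwu : w ≠ u := fun h => hwA (h ▸ hu.1)
    have hwv : w ≠ v := fun h => hwB (h ▸ hv.1)
    simp [hwA, hwB, hwu, hwv]
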